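/- Let ψ ∈ L²(S¹,ℝ), ψ̌(x) := ψ(−x), and let h : ℝ×S¹ → ℝ be such that h(t,·) is bounded and measurable for each t. If u : ℝ → L²(S¹,ℂ) is a differentiable curve satisfying u'(t) = −i·( h(t,·)·(u(t)*ψ) )*ψ̌ for all t ∈ ℝ, then the norm ‖u(t)‖₂ is constant in t. -/

import Mathlib

open MeasureTheory Complex
open scoped ENNReal

noncomputable section

instance : Fact (0 < 2 * Real.pi) := ⟨by positivity⟩

/-- The circle `S¹ = ℝ/2πℤ`, with its Lebesgue measure of total mass `2π`. -/
abbrev SC := AddCircle (2 * Real.pi)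

/-- Convolution of two complex-valued functions on the circle:
`(u * v)(x) = ∫₀^{2π} u(y) v(x−y) dy`. -/
def conv (u v : SC → ℂ) : SC → ℂ := fun x => ∫ y, u y * v (x - y)

/-- Complexification of a real-valued function on the circle. -/
def cplx (ψ : SC → ℝ) : SC → ℂ := fun x => (ψ x : ℂ)

/-- The `L²`-norm of a complex-valued function on the circle. -/
def l2norm (u : SC → ℂ) : ℝ := (∫ x, ‖u x‖ ^ 2) ^ ((1 : ℝ) / 2)

/-- The `n`-th Fourier coefficient `û(n) = (2π)^{−1/2} ∫₀^{2π} u(x) e^{−inx} dx`. -/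
def fc (u : SC → ℂ) (n : ℤ) : ℂ :=
  (Real.sqrt (2 * Real.pi) : ℂ)⁻¹ * ∫ x, u x * (starRingEnd ℂ) (fourier n x)

/-- The Fourier truncation `u^k(x) = (2π)^{−1/2} Σ_{|n|≤k} û(n) e^{inx}`. -/
def trunc (u : SC → ℂ) (k : ℕ) : SC → ℂ := fun x =>
  (Real.sqrt (2 * Real.pi) : ℂ)⁻¹ * ∑ n ∈ Finset.Icc (-(k : ℤ)) (k : ℤ), fc u n * fourier n x

/-- Solutions of `u' = −i(h·(u*ψ))*ψ̌` have constant `L²`-norm. -/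
theorem norm_constant_of_hamiltonian_ode (ψ : SC → ℝ) (hψ : MemLp ψ 2 volume)
    (h : ℝ → SC → ℝ) (hmeas : ∀ t : ℝ, Measurable (h t))
    (hbd : ∀ t : ℝ, ∃ C : ℝ, ∀ x : SC, |h t x| ≤ C)
    (u u' : ℝ → Lp ℂ 2 (volume : Measure SC))
    (hderiv : ∀ t : ℝ, HasDerivAt u (u' t) t)
    (heq : ∀ t : ℝ, (u' t : SC → ℂ) =ᵐ[volume] fun x =>
      -(Complex.I *
        conv (fun y => (h t y : ℂ) * conv (↑(u t)) (cplx ψ) y) (cplx fun x => ψ (-x)) x)) :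
    ∀ s t : ℝ, ‖u s‖ = ‖u t‖ := by
  have key : ∀ t : ℝ, (inner ℂ (u t) (u' t) : ℂ).re = 0 := by
    intro t
    obtain ⟨C, hC⟩ := hbd t
    have hC0 : 0 ≤ C := le_trans (abs_nonneg _) (hC 0)
    have heqt := heq t
    set U : SC → ℂ := ((u t : Lp ℂ 2 (volume : Measure SC)) : SC → ℂ) with hUdef
    set V : SC → ℂ := ((u' t : Lp ℂ 2 (volume : Measure SC)) : SC → ℂ) with hVdef
    have hUm : StronglyMeasurable U := Lp.stronglyMeasurable _
    have hU2 : MemLp U 2 (volume : Measure SC) := Lp.memLp _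
    set ψ' : SC → ℝ := hψ.1.mk ψ with hψ'def
    have hψ'm : StronglyMeasurable ψ' := hψ.1.stronglyMeasurable_mk
    have hψae : ψ =ᵐ[volume] ψ' := hψ.1.ae_eq_mk
    have hψ'2 : MemLp ψ' 2 (volume : Measure SC) := hψ.ae_eq hψae
    set g : SC → ℂ := fun y => ∫ z, U z * ((ψ' (y - z) : ℝ) : ℂ) with hgdef
    -- measurability of g
    have hker : StronglyMeasurable (fun p : SC × SC => U p.2 * ((ψ' (p.1 - p.2) : ℝ) : ℂ)) :=
      (hUm.comp_measurable measurable_snd).mul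
        (Complex.continuous_ofReal.comp_stronglyMeasurable
          (hψ'm.comp_measurable (measurable_fst.sub measurable_snd)))
    have hgm : StronglyMeasurable g :=
      StronglyMeasurable.integral_prod_right
        (f := fun y z => U z * ((ψ' (y - z) : ℝ) : ℂ)) hker
    -- integrability of squares
    have hA : Integrable (fun z => ‖U z‖ ^ 2) (volume : Measure SC) := by
      have := hU2.integrable_norm_rpow (by norm_num) (by norm_num)
      have h2 : ((2 : ℝ≥0∞).toReal) = ((2 : ℕ) : ℝ) := by norm_num
      simpa [h2, Real.rpow_natCast] using this
    have hB : Integrable (fun z => ‖ψ' z‖ ^ 2) (volume : Measure SC) := by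
      have := hψ'2.integrable_norm_rpow (by norm_num) (by norm_num)
      have h2 : ((2 : ℝ≥0∞).toReal) = ((2 : ℕ) : ℝ) := by norm_num
      simpa [h2, Real.rpow_natCast] using this
    set M : ℝ := ((∫ z, ‖U z‖ ^ 2) + ∫ z, ‖ψ' z‖ ^ 2) / 2 with hMdef
    -- pointwise bound on g
    have hgb : ∀ y : SC, ‖g y‖ ≤ M := by
      intro y
      have hBy : Integrable (fun z => ‖ψ' (y - z)‖ ^ 2) (volume : Measure SC) :=
        hB.comp_sub_left y
      have h1 : ‖g y‖ ≤ ∫ z, ‖U z * ((ψ' (y - z) : ℝ) : ℂ)‖ := norm_integral_le_integral_norm _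
      have h2 : (∫ z, ‖U z * ((ψ' (y - z) : ℝ) : ℂ)‖)
          ≤ ∫ z, (‖U z‖ ^ 2 + ‖ψ' (y - z)‖ ^ 2) / 2 := by
        refine integral_mono_of_nonneg (Filter.Eventually.of_forall fun z => norm_nonneg _)
          ((hA.add hBy).div_const 2) (Filter.Eventually.of_forall fun z => ?_)
        simp only [norm_mul, Complex.norm_real, Real.norm_eq_abs, sq_abs]
        nlinarith [norm_nonneg (U z), norm_nonneg (ψ' (y - z)),
          sq_nonneg (‖U z‖ - |ψ' (y - z)|), abs_nonneg (ψ' (y - z)), sq_abs (ψ' (y - z))]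
      have h3 : (∫ z, (‖U z‖ ^ 2 + ‖ψ' (y - z)‖ ^ 2) / 2) = M := by
        rw [integral_div, integral_add hA hBy, hMdef]
        congr 2
        exact integral_sub_left_eq_self (fun z => ‖ψ' z‖ ^ 2) volume y
      calc ‖g y‖ ≤ _ := h1
        _ ≤ _ := h2
        _ = M := h3
    have hM0 : 0 ≤ M := le_trans (norm_nonneg (g 0)) (hgb 0)
    set f : SC → ℂ := fun y => ((h t y : ℝ) : ℂ) * g y with hfdef
    have hfm : StronglyMeasurable f :=
      (Complex.continuous_ofReal.comp_stronglyMeasurable (hmeas t).stronglyMeasurable).mul hgm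
    have hfb : ∀ y : SC, ‖f y‖ ≤ C * M := by
      intro y
      rw [hfdef]
      simp only [norm_mul, Complex.norm_real, Real.norm_eq_abs]
      exact mul_le_mul (hC y) (hgb y) (norm_nonneg _) hC0
    -- rewrite the convolutions using the measurable representative ψ'
    have hconv1 : ∀ y : SC, conv U (cplx ψ) y = g y := by
      intro y
      refine integral_congr_ae ?_
      have h0 : (fun z : SC => ψ (y - z)) =ᵐ[volume] fun z => ψ' (y - z) :=
        (Measure.measurePreserving_sub_left volume y).quasiMeasurePreserving.ae_eq_comp hψae
      filter_upwards [h0] with z hz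
      simp only [cplx, hz]
    have heq' : V =ᵐ[volume] fun x => -(I * ∫ y, f y * ((ψ' (y - x) : ℝ) : ℂ)) := by
      refine heqt.trans (Filter.Eventually.of_forall fun x => ?_)
      have hx : conv (fun y => ((h t y : ℝ) : ℂ) * conv U (cplx ψ) y) (cplx fun z => ψ (-z)) x
          = ∫ y, f y * ((ψ' (y - x) : ℝ) : ℂ) := by
        refine integral_congr_ae ?_
        have h0 : (fun y : SC => ψ (y - x)) =ᵐ[volume] fun y => ψ' (y - x) :=
          (measurePreserving_sub_right volume x).quasiMeasurePreserving.ae_eq_comp hψae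
        filter_upwards [h0] with y hy
        simp only [cplx, neg_sub, hy, hconv1 y, hfdef]
      dsimp only
      rw [hx]
    -- the kernel for Fubini
    set k : SC → SC → ℂ := fun x y => (starRingEnd ℂ) (U x) * (f y * ((ψ' (y - x) : ℝ) : ℂ))
      with hkdef
    have hkm : StronglyMeasurable (Function.uncurry k) := by
      refine StronglyMeasurable.mul ?_ (StronglyMeasurable.mul ?_ ?_)
      · exact Complex.continuous_conj.comp_stronglyMeasurable
          (hUm.comp_measurable measurable_fst)
      · exact hfm.comp_measurable measurable_snd
      · exact Complex.continuous_ofReal.comp_stronglyMeasurable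
          (hψ'm.comp_measurable (measurable_snd.sub measurable_fst))
    have hψ'1 : Integrable ψ' (volume : Measure SC) := hψ'2.integrable one_le_two
    have hU1 : Integrable U (volume : Measure SC) := hU2.integrable one_le_two
    have hbound : ∀ x y : SC, ‖k x y‖ ≤ ‖U x‖ * (C * M) * |ψ' (y - x)| := by
      intro x y
      rw [hkdef]
      simp only [norm_mul, Complex.norm_real, Real.norm_eq_abs, RCLike.norm_conj]
      calc ‖U x‖ * (‖f y‖ * |ψ' (y - x)|)
          ≤ ‖U x‖ * ((C * M) * |ψ' (y - x)|) :=
            mul_le_mul_of_nonneg_left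
              (mul_le_mul_of_nonneg_right (hfb y) (abs_nonneg _)) (norm_nonneg _)
        _ = ‖U x‖ * (C * M) * |ψ' (y - x)| := by ring
    have hk1 : ∀ x : SC, Integrable (fun y => k x y) (volume : Measure SC) := by
      intro x
      have hint : Integrable (fun y : SC => ‖U x‖ * (C * M) * |ψ' (y - x)|) volume :=
        ((hψ'1.abs.comp_sub_right x).const_mul _)
      refine Integrable.mono' hint
        ((hkm.comp_measurable measurable_prodMk_left).aestronglyMeasurable)
        (Filter.Eventually.of_forall fun y => hbound x y)
    have hk2 : Integrable (fun x => ∫ y, ‖k x y‖) (volume : Measure SC) := by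
      have hint : Integrable (fun x : SC => ‖U x‖ * ((C * M) * ∫ z, |ψ' z|)) volume :=
        hU1.norm.mul_const _
      refine Integrable.mono' hint ((StronglyMeasurable.integral_prod_right (f := fun x y => ‖k x y‖) hkm.norm).aestronglyMeasurable)
        (Filter.Eventually.of_forall fun x => ?_)
      rw [Real.norm_of_nonneg (integral_nonneg fun y => norm_nonneg _)]
      have h1 : (∫ y, ‖k x y‖) ≤ ∫ y, ‖U x‖ * (C * M) * |ψ' (y - x)| := by
        refine integral_mono_of_nonneg (Filter.Eventually.of_forall fun y => norm_nonneg _)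
          (((hψ'1.abs.comp_sub_right x).const_mul _))
          (Filter.Eventually.of_forall fun y => hbound x y)
      calc (∫ y, ‖k x y‖) ≤ ∫ y, ‖U x‖ * (C * M) * |ψ' (y - x)| := h1
        _ = ‖U x‖ * (C * M) * ∫ y, |ψ' (y - x)| := integral_const_mul _ _
        _ = ‖U x‖ * ((C * M) * ∫ z, |ψ' z|) := by
            rw [integral_sub_right_eq_self (fun z => |ψ' z|) x]
            ring
    have hkint : Integrable (Function.uncurry k) ((volume : Measure SC).prod volume) := by
      refine (integrable_prod_iff hkm.aestronglyMeasurable).2 ⟨?_, ?_⟩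
      · exact Filter.Eventually.of_forall hk1
      · exact hk2
    -- the main computation
    have hinner : (inner ℂ (u t) (u' t) : ℂ) = ∫ x, (starRingEnd ℂ) (U x) * V x := by
      rw [L2.inner_def]
      simp only [RCLike.inner_apply]
      simp only [mul_comm]
      rfl
    have e1 : (∫ x, (starRingEnd ℂ) (U x) * V x)
        = ∫ x, (starRingEnd ℂ) (U x) * (-(I * ∫ y, f y * ((ψ' (y - x) : ℝ) : ℂ))) :=
      integral_congr_ae (heq'.mono fun x hx => by dsimp only; rw [hx])
    have e2 : (∫ x, (starRingEnd ℂ) (U x) * (-(I * ∫ y, f y * ((ψ' (y - x) : ℝ) : ℂ))))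
        = -(I * ∫ x, ∫ y, k x y) := by
      have hpt : ∀ x : SC, (starRingEnd ℂ) (U x) * (-(I * ∫ y, f y * ((ψ' (y - x) : ℝ) : ℂ)))
          = -(I * ∫ y, k x y) := by
        intro x
        have : (∫ y, k x y) = (starRingEnd ℂ) (U x) * ∫ y, f y * ((ψ' (y - x) : ℝ) : ℂ) := by
          rw [hkdef, integral_const_mul]
        rw [this]; ring
      simp_rw [hpt]
      rw [integral_neg, integral_const_mul]
    have e3 : (∫ x, ∫ y, k x y) = ∫ y, ∫ x, k x y := integral_integral_swap hkint
    have e4 : ∀ y : SC, (∫ x, k x y) = ((h t y * Complex.normSq (g y) : ℝ) : ℂ) := by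
      intro y
      have hpt : ∀ x : SC, k x y = f y * ((starRingEnd ℂ) (U x) * ((ψ' (y - x) : ℝ) : ℂ)) := by
        intro x; rw [hkdef]; ring
      have hcg : (∫ x, (starRingEnd ℂ) (U x) * ((ψ' (y - x) : ℝ) : ℂ))
          = (starRingEnd ℂ) (g y) := by
        rw [hgdef, ← integral_conj]
        refine integral_congr_ae (Filter.Eventually.of_forall fun x => ?_)
        simp [map_mul, Complex.conj_ofReal]
      calc (∫ x, k x y) = ∫ x, f y * ((starRingEnd ℂ) (U x) * ((ψ' (y - x) : ℝ) : ℂ)) := by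
            simp_rw [hpt]
        _ = f y * ∫ x, (starRingEnd ℂ) (U x) * ((ψ' (y - x) : ℝ) : ℂ) := integral_const_mul _ _
        _ = f y * (starRingEnd ℂ) (g y) := by rw [hcg]
        _ = ((h t y * Complex.normSq (g y) : ℝ) : ℂ) := by
            rw [hfdef]
            push_cast
            rw [mul_assoc, Complex.mul_conj]
    have e5 : (∫ y, ∫ x, k x y) = ((∫ y, h t y * Complex.normSq (g y) : ℝ) : ℂ) := by
      simp_rw [e4]
      exact integral_ofReal
    rw [hinner, e1, e2, e3, e5]
    simp
  -- conclude: the squared norm is constant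
  have hd : ∀ r : ℝ, HasDerivAt (fun s => (inner ℂ (u s) (u s) : ℂ)) 0 r := by
    intro r
    have H := (hderiv r).inner ℂ (hderiv r)
    have hz : (inner ℂ (u r) (u' r) : ℂ) + inner ℂ (u' r) (u r) = 0 := by
      have h1 : (inner ℂ (u' r) (u r) : ℂ) = (starRingEnd ℂ) (inner ℂ (u r) (u' r) : ℂ) :=
        (inner_conj_symm _ _).symm
      rw [h1, Complex.add_conj, key r]
      norm_num
    rwa [hz] at H
  have hconst : ∀ s t : ℝ, (inner ℂ (u s) (u s) : ℂ) = inner ℂ (u t) (u t) :=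
    is_const_of_deriv_eq_zero (𝕜 := ℝ) (fun s => (hd s).differentiableAt)
      (fun s => (hd s).deriv)
  intro s t
  have h2 := hconst s t
  rw [inner_self_eq_norm_sq_to_K, inner_self_eq_norm_sq_to_K] at h2
  have h3 : (‖u s‖ : ℝ) ^ 2 = (‖u t‖ : ℝ) ^ 2 := by exact_mod_cast h2
  nlinarith [norm_nonneg (u s), norm_nonneg (u t)]
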